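/- arXiv:2603.03612 — 6 statements merged into one kernel-verified Lean document; each statement's English description precedes it below -/
import Mathlib

section
/- Let K be a commutative ring, d ≥ 1, N ≥ 1, and for each i ∈ {1,…,N} let πᵢ : {1,…,d} → {1,…,d} be a function and dᵢ ∈ K^d a vector. Then the ordered product ∏_{i=1}^{N} (P(πᵢ)·diag(dᵢ)) (with factors multiplied left to right in order of increasing i) equals P(π₁ ∘ π₂ ∘ ⋯ ∘ π_N) · ∏_{j=1}^{N} diag(dⱼ ∘ σⱼ), where σⱼ := π_{j+1} ∘ π_{j+2} ∘ ⋯ ∘ π_N (and σ_N is the identity function), and dⱼ ∘ σⱼ denotes the vector whose k-th entry is dⱼ(σⱼ(k)). -/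
/-- The column one-hot matrix of a function `π : Fin d → Fin d`:
`P(π)_{i,j} = 1` if `π j = i` and `0` otherwise. -/
def colOneHot {d : ℕ} (K : Type*) [CommRing K] (π : Fin d → Fin d) :
    Matrix (Fin d) (Fin d) K :=
  Matrix.of fun i j => if π j = i then 1 else 0

lemma colOneHot_id {d : ℕ} (K : Type*) [CommRing K] :
    colOneHot (d := d) K id = 1 := by
  ext i j
  simp [colOneHot, Matrix.one_apply, eq_comm]

lemma colOneHot_mul_colOneHot {d : ℕ} (K : Type*) [CommRing K]
    (f g : Fin d → Fin d) :
    colOneHot K f * colOneHot K g = colOneHot K (f ∘ g) := by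
  ext i j
  simp only [colOneHot, Matrix.mul_apply, Matrix.of_apply, Function.comp]
  rw [Finset.sum_eq_single (g j)] <;> aesop

lemma diagonal_mul_colOneHot {d : ℕ} (K : Type*) [CommRing K]
    (v : Fin d → K) (f : Fin d → Fin d) :
    Matrix.diagonal v * colOneHot K f = colOneHot K f * Matrix.diagonal (v ∘ f) := by
  ext i j
  simp only [Matrix.diagonal_mul, Matrix.mul_diagonal, colOneHot, Matrix.of_apply, Function.comp]
  split <;> simp_all [mul_comm]

lemma pd_aux {d : ℕ} (K : Type*) [CommRing K] :
    ∀ (N : ℕ) (π : Fin N → Fin d → Fin d) (dvec : Fin N → Fin d → K),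
    (List.ofFn fun i => colOneHot K (π i) * Matrix.diagonal (dvec i)).prod =
      colOneHot K ((List.ofFn π).foldr Function.comp id) *
        (List.ofFn fun j : Fin N =>
          Matrix.diagonal
            (dvec j ∘ ((List.ofFn π).drop ((j : ℕ) + 1)).foldr Function.comp id)).prod := by
  intro N
  induction N with
  | zero => intro π dvec; simp [colOneHot_id K]
  | succ N ih =>
    intro π dvec
    simp only [List.ofFn_succ, List.prod_cons, Fin.val_succ, Fin.val_zero,
      List.drop_succ_cons, List.drop_zero, Nat.zero_add, List.foldr_cons,
      ih (fun i => π i.succ) (fun i => dvec i.succ)]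
    rw [← mul_assoc, mul_assoc (colOneHot K (π 0)), diagonal_mul_colOneHot,
      ← mul_assoc, colOneHot_mul_colOneHot, mul_assoc]

/-- the ordered product `∏_{i=1}^{N} (P(πᵢ)·diag(dᵢ))` equals
`P(π₁ ∘ ⋯ ∘ π_N) · ∏_{j=1}^{N} diag(dⱼ ∘ σⱼ)` where
`σⱼ = π_{j+1} ∘ ⋯ ∘ π_N` (so `σ_N = id`).
Here `σⱼ` is realized as the right fold of `Function.comp` over the list of the
`πᵢ` with the first `j` elements dropped. -/
theorem pd_list_prod {d N : ℕ} (hd : 1 ≤ d) (hN : 1 ≤ N) (K : Type*) [CommRing K]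
    (π : Fin N → Fin d → Fin d) (dvec : Fin N → Fin d → K) :
    (List.ofFn fun i => colOneHot K (π i) * Matrix.diagonal (dvec i)).prod =
      colOneHot K ((List.ofFn π).foldr Function.comp id) *
        (List.ofFn fun j : Fin N =>
          Matrix.diagonal
            (dvec j ∘ ((List.ofFn π).drop ((j : ℕ) + 1)).foldr Function.comp id)).prod :=
  pd_aux K N π dvec
end

section
/- Let K be a commutative ring, d ≥ 1, dst ∈ {1,…,d}, and c ∈ K^d with c_dst = 0. Set w = 𝟙 (the all-ones vector), a = e_dst, κ = e_dst − c, and λ = 1. Then diag(w) − λ·κ·(a ⊙ κ)ᵀ = U(dst;c), where ⊙ denotes the elementwise (Hadamard) product of vectors. That is, every dot-product overwrite matrix is realizable as a single RWKV-7-style multiplicative transition matrix A(w,a,κ;λ) := diag(w) − λ κ (a ⊙ κ)ᵀ. -/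
/-- The dot-product overwrite matrix
`U(dst; c) = I − e_dst e_dstᵀ + c e_dstᵀ`. -/
def overwrite {d : ℕ} (K : Type*) [CommRing K] (dst : Fin d) (c : Fin d → K) :
    Matrix (Fin d) (Fin d) K :=
  1 - Matrix.vecMulVec (Pi.single dst 1) (Pi.single dst 1)
    + Matrix.vecMulVec c (Pi.single dst 1)

/-- The RWKV-7-style transition matrix `A(w,a,κ;λ) = diag(w) − λ κ (a ⊙ κ)ᵀ`,
where `⊙` is the elementwise (Hadamard) product. -/
def rwkvTransition {d : ℕ} (K : Type*) [CommRing K]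
    (w a κ : Fin d → K) (lam : K) : Matrix (Fin d) (Fin d) K :=
  Matrix.diagonal w - lam • Matrix.vecMulVec κ (a * κ)

/-- with `w = 𝟙`, `a = e_dst`, `κ = e_dst − c`, `λ = 1`,
the RWKV transition matrix `diag(w) − λ κ (a ⊙ κ)ᵀ` equals `U(dst;c)`. -/
theorem rwkvTransition_eq_overwrite {d : ℕ} (hd : 1 ≤ d) (K : Type*) [CommRing K]
    (dst : Fin d) (c : Fin d → K) (hc : c dst = 0) :
    rwkvTransition K (fun _ => 1) (Pi.single dst 1) (Pi.single dst 1 - c) 1 =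
      overwrite K dst c := by
  ext i j
  simp only [rwkvTransition, overwrite, Matrix.vecMulVec_apply, Matrix.diagonal_apply,
    Matrix.sub_apply, Matrix.add_apply, Matrix.one_apply, Matrix.smul_apply, Pi.single_apply,
    Pi.sub_apply, Pi.mul_apply, smul_eq_mul, one_mul]
  by_cases hi : i = dst <;> by_cases hj : j = dst <;> simp [hi, hj, hc] <;> ring
end

section
/- Let d ≥ 2 and let src, dst ∈ {1,…,d} with src ≠ dst. Over ℚ, define u := e_src + e_dst and w := e_src + 2·e_dst. Then H(2, u) · H(1/2, e_src) · H(1/3, w) = I + e_src e_dstᵀ. That is, the unit transvection T(src→dst) := I + e_src e_dstᵀ (which, acting on row vectors by right multiplication, performs r_dst ← r_dst + r_src and leaves all other coordinates unchanged) is the product of three multiplicative DeltaNet step matrices. -/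
/-- The multiplicative DeltaNet step matrix `H(β, k) = I − β k kᵀ`. -/
def Hstep {ι : Type*} [Fintype ι] [DecidableEq ι] (K : Type*) [CommRing K]
    (β : K) (k : ι → K) : Matrix ι ι K :=
  1 - β • Matrix.vecMulVec k k

open Matrix
section aux

variable {ι : Type*} [Fintype ι] [DecidableEq ι] {K : Type*} [CommRing K]

lemma vv_mul_vv (a b c e : ι → K) :
    Matrix.vecMulVec a b * Matrix.vecMulVec c e =
      (b ⬝ᵥ c) • Matrix.vecMulVec a e := by
  ext i j
  simp only [Matrix.mul_apply, Matrix.vecMulVec_apply, Matrix.smul_apply,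
    dotProduct, smul_eq_mul, Finset.sum_mul]
  apply Finset.sum_congr rfl
  intros; ring

lemma vv_add_left (a b c : ι → K) :
    Matrix.vecMulVec (a + b) c = Matrix.vecMulVec a c + Matrix.vecMulVec b c := by
  ext i j; simp [Matrix.vecMulVec_apply, add_mul]

lemma vv_add_right (a b c : ι → K) :
    Matrix.vecMulVec a (b + c) = Matrix.vecMulVec a b + Matrix.vecMulVec a c := by
  ext i j; simp [Matrix.vecMulVec_apply, mul_add]

lemma vv_smul_left (r : K) (a c : ι → K) :
    Matrix.vecMulVec (r • a) c = r • Matrix.vecMulVec a c := by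
  ext i j; simp [Matrix.vecMulVec_apply, mul_assoc]

lemma vv_smul_right (r : K) (a c : ι → K) :
    Matrix.vecMulVec a (r • c) = r • Matrix.vecMulVec a c := by
  ext i j; simp [Matrix.vecMulVec_apply]; ring

lemma single_dot_single (i j : ι) :
    (Pi.single i 1 : ι → K) ⬝ᵥ (Pi.single j 1 : ι → K) = if i = j then 1 else 0 := by
  simp [dotProduct, Pi.single_apply, eq_comm]

end aux

/-- with `u = e_src + e_dst` and `w = e_src + 2·e_dst`,
`H(2,u) · H(1/2, e_src) · H(1/3, w) = I + e_src e_dstᵀ`, the unit transvection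
`T(src → dst)`. -/
theorem three_Hsteps_eq_transvection {d : ℕ} (hd : 2 ≤ d) (src dst : Fin d)
    (hne : src ≠ dst) :
    Hstep ℚ 2 ((Pi.single src 1 + Pi.single dst 1 : Fin d → ℚ)) *
      Hstep ℚ (1 / 2) (Pi.single src 1) *
      Hstep ℚ (1 / 3)
        ((Pi.single src 1 + (2 : ℚ) • (Pi.single dst 1 : Fin d → ℚ) : Fin d → ℚ)) =
    1 + Matrix.vecMulVec (Pi.single src (1 : ℚ)) (Pi.single dst 1) := by
  set s : Fin d → ℚ := Pi.single src 1 with hs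
  set t : Fin d → ℚ := Pi.single dst 1 with ht
  have hss : s ⬝ᵥ s = 1 := by simp [hs, single_dot_single]
  have htt : t ⬝ᵥ t = 1 := by simp [ht, single_dot_single]
  have hst : s ⬝ᵥ t = 0 := by simp [hs, ht, single_dot_single, hne]
  have hts : t ⬝ᵥ s = 0 := by simp [hs, ht, single_dot_single, hne.symm]
  simp only [Hstep, sub_mul, mul_sub, one_mul, mul_one, Matrix.smul_mul,
    Matrix.mul_smul, vv_add_left, vv_add_right, vv_smul_left, vv_smul_right,
    add_mul, mul_add, vv_mul_vv, hss, htt, hst, hts, smul_add, smul_smul]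
  module
end

section
/- Let d ≥ 3, let src, dst, tmp ∈ {1,…,d} be pairwise distinct indices, and let λ ∈ ℚ. Then there exist scalars β₁, …, β₈ ∈ ℚ and column vectors k₁, …, k₈ ∈ ℚ^d such that for every row vector r ∈ ℚ^{1×d} with r_tmp = 0, the row vector r′ := r · H(β₁,k₁) · H(β₂,k₂) ⋯ H(β₈,k₈) satisfies: r′_dst = r_dst + λ·r_src, r′_j = r_j for every j ≠ dst, and r′_tmp = 0. -/
lemma vecMul_Hstep {d : ℕ} (β : ℚ) (k r : Fin d → ℚ) :
    Matrix.vecMul r (Hstep ℚ β k) =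
      fun j => r j - β * (∑ i, r i * k i) * k j := by
  funext j
  simp only [Hstep, Matrix.vecMul, dotProduct, Matrix.sub_apply, Matrix.one_apply,
    Matrix.smul_apply, Matrix.vecMulVec_apply, smul_eq_mul, mul_sub, Finset.sum_sub_distrib,
    mul_ite, mul_one, mul_zero, Finset.sum_ite_eq', Finset.mem_univ, if_true]
  have h : ∑ i, r i * (β * (k i * k j)) = (∑ i, r i * k i) * (β * k j) := by
    rw [Finset.sum_mul]
    exact Finset.sum_congr rfl fun i _ => by ring
  rw [h]; ring

lemma Hstep_zero {d : ℕ} : Hstep ℚ (0 : ℚ) (0 : Fin d → ℚ) = 1 := by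
  simp [Hstep]

/-- scaled add via a temp register.  For pairwise distinct indices
`src, dst, tmp` and any `λ ∈ ℚ`, there is a length-8 sequence of multiplicative
DeltaNet steps whose product maps every row vector `r` with `r_tmp = 0` to `r′`
with `r′_dst = r_dst + λ·r_src`, `r′_j = r_j` for `j ≠ dst`, and `r′_tmp = 0`. -/
theorem scaled_add_via_temp {d : ℕ} (hd : 3 ≤ d) (src dst tmp : Fin d)
    (h₁ : src ≠ dst) (h₂ : src ≠ tmp) (h₃ : dst ≠ tmp) (lam : ℚ) :
    ∃ (β : Fin 8 → ℚ) (k : Fin 8 → Fin d → ℚ),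
      ∀ r : Fin d → ℚ, r tmp = 0 →
        (Matrix.vecMul r (List.ofFn fun i => Hstep ℚ (β i) (k i)).prod) dst =
            r dst + lam * r src ∧
        (∀ j ≠ dst,
          (Matrix.vecMul r (List.ofFn fun i => Hstep ℚ (β i) (k i)).prod) j = r j) ∧
        (Matrix.vecMul r (List.ofFn fun i => Hstep ℚ (β i) (k i)).prod) tmp = 0 := by
  set K0 : Fin d → ℚ :=
    fun j => (if j = src then 1 else 0) + (if j = tmp then 7 * lam / 8 else 0) with hK0
  set K1 : Fin d → ℚ := fun j => if j = src then 1 else 0 with hK1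
  set K2 : Fin d → ℚ :=
    fun j => (if j = tmp then 1 else 0) + (if j = dst then 1 else 0) with hK2
  set K3 : Fin d → ℚ := fun j => if j = dst then 1 else 0 with hK3
  set K4 : Fin d → ℚ :=
    fun j => (if j = tmp then 1 else 0) + (if j = dst then -3 else 0) with hK4
  set K5 : Fin d → ℚ := fun j => if j = tmp then 1 else 0 with hK5
  refine ⟨![-1, 1/2, -1, 2, 1/7, 1, 0, 0], ![K0, K1, K2, K3, K4, K5, 0, 0], ?_⟩
  intro r hr
  have hts : tmp ≠ src := h₂.symm
  have htd : tmp ≠ dst := h₃.symm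
  have hds : dst ≠ src := h₁.symm
  -- closed forms for the intermediate vectors
  have e1 : Matrix.vecMul r (Hstep ℚ (-1 : ℚ) K0) =
      fun j => if j = src then 2 * r src else if j = tmp then 7 * lam / 8 * r src else r j := by
    rw [vecMul_Hstep]
    have hs : (∑ i, r i * K0 i) = r src := by
      simp [hK0, mul_add, Finset.sum_add_distrib, mul_ite, mul_one, mul_zero,
        Finset.sum_ite_eq', hr]
    rw [hs]; funext j
    rcases eq_or_ne j src with hjs | hjs
    · subst hjs; simp [hK0, h₂, hts]; try ring
    · rcases eq_or_ne j tmp with hjt | hjt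
      · subst hjt; simp [hK0, hts, hr]; try ring
      · simp [hK0, hjs, hjt]
  have e2 : Matrix.vecMul
      (fun j => if j = src then 2 * r src else if j = tmp then 7 * lam / 8 * r src else r j)
      (Hstep ℚ (1/2 : ℚ) K1) =
      fun j => if j = tmp then 7 * lam / 8 * r src else r j := by
    rw [vecMul_Hstep]
    have hs : (∑ i, (if i = src then 2 * r src else if i = tmp then 7 * lam / 8 * r src else r i)
        * K1 i) = 2 * r src := by
      simp [hK1, mul_ite, mul_one, mul_zero, Finset.sum_ite_eq']
    rw [hs]; funext j
    rcases eq_or_ne j src with hjs | hjs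
    · subst hjs; simp [hK1, h₂]; try ring
    · simp [hK1, hjs]
  have e3 : Matrix.vecMul (fun j => if j = tmp then 7 * lam / 8 * r src else r j)
      (Hstep ℚ (-1 : ℚ) K2) =
      fun j => if j = tmp then 7 * lam / 4 * r src + r dst
        else if j = dst then 7 * lam / 8 * r src + 2 * r dst else r j := by
    rw [vecMul_Hstep]
    have hs : (∑ i, (if i = tmp then 7 * lam / 8 * r src else r i) * K2 i)
        = 7 * lam / 8 * r src + r dst := by
      simp [hK2, mul_add, Finset.sum_add_distrib, mul_ite, mul_one, mul_zero,
        Finset.sum_ite_eq', htd, h₃]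
    rw [hs]; funext j
    rcases eq_or_ne j tmp with hjt | hjt
    · subst hjt; simp [hK2, htd, hr]; try ring
    · rcases eq_or_ne j dst with hjd | hjd
      · subst hjd; simp [hK2, htd.symm, hjt, hds]; try ring
      · simp [hK2, hjt, hjd]
  have e4 : Matrix.vecMul
      (fun j => if j = tmp then 7 * lam / 4 * r src + r dst
        else if j = dst then 7 * lam / 8 * r src + 2 * r dst else r j)
      (Hstep ℚ (2 : ℚ) K3) =
      fun j => if j = tmp then 7 * lam / 4 * r src + r dst
        else if j = dst then -(7 * lam / 8 * r src) - 2 * r dst else r j := by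
    rw [vecMul_Hstep]
    have hs : (∑ i, (if i = tmp then 7 * lam / 4 * r src + r dst
        else if i = dst then 7 * lam / 8 * r src + 2 * r dst else r i) * K3 i)
        = 7 * lam / 8 * r src + 2 * r dst := by
      simp [hK3, mul_ite, mul_one, mul_zero, Finset.sum_ite_eq', htd, h₃]
    rw [hs]; funext j
    rcases eq_or_ne j tmp with hjt | hjt
    · subst hjt; simp [hK3, htd]; try ring
    · rcases eq_or_ne j dst with hjd | hjd
      · subst hjd; simp [hK3, hjt]; try ring
      · simp [hK3, hjt, hjd]
  have e5 : Matrix.vecMul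
      (fun j => if j = tmp then 7 * lam / 4 * r src + r dst
        else if j = dst then -(7 * lam / 8 * r src) - 2 * r dst else r j)
      (Hstep ℚ (1/7 : ℚ) K4) =
      fun j => if j = tmp then 9 * lam / 8 * r src
        else if j = dst then r dst + lam * r src else r j := by
    rw [vecMul_Hstep]
    have hs : (∑ i, (if i = tmp then 7 * lam / 4 * r src + r dst
        else if i = dst then -(7 * lam / 8 * r src) - 2 * r dst else r i) * K4 i)
        = 35 * lam / 8 * r src + 7 * r dst := by
      simp [hK4, mul_add, Finset.sum_add_distrib, mul_ite, mul_one, mul_zero,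
        Finset.sum_ite_eq', htd, h₃]
      ring
    rw [hs]; funext j
    rcases eq_or_ne j tmp with hjt | hjt
    · subst hjt; simp [hK4, htd]; try ring
    · rcases eq_or_ne j dst with hjd | hjd
      · subst hjd; simp [hK4, hjt, hds]; try ring
      · simp [hK4, hjt, hjd]
  have e6 : Matrix.vecMul
      (fun j => if j = tmp then 9 * lam / 8 * r src
        else if j = dst then r dst + lam * r src else r j)
      (Hstep ℚ (1 : ℚ) K5) =
      fun j => if j = tmp then 0
        else if j = dst then r dst + lam * r src else r j := by
    rw [vecMul_Hstep]
    have hs : (∑ i, (if i = tmp then 9 * lam / 8 * r src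
        else if i = dst then r dst + lam * r src else r i) * K5 i)
        = 9 * lam / 8 * r src := by
      simp [hK5, mul_ite, mul_one, mul_zero, Finset.sum_ite_eq']
    rw [hs]; funext j
    rcases eq_or_ne j tmp with hjt | hjt
    · subst hjt; simp [hK5, htd]; try ring
    · simp [hK5, hjt]
  have key : Matrix.vecMul r
      (List.ofFn fun i => Hstep ℚ ((![-1, 1/2, -1, 2, 1/7, 1, 0, 0] : Fin 8 → ℚ) i)
        ((![K0, K1, K2, K3, K4, K5, 0, 0] : Fin 8 → Fin d → ℚ) i)).prod =
      fun j => if j = tmp then 0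
        else if j = dst then r dst + lam * r src else r j := by
    simp only [List.ofFn_succ, List.ofFn_zero, List.prod_cons, List.prod_nil,
      Matrix.cons_val_zero, Matrix.cons_val_succ, Fin.succ_zero_eq_one, mul_one,
      ← Matrix.vecMul_vecMul, Hstep_zero, Matrix.vecMul_one]
    rw [e1, e2, e3, e4, e5, e6]
  rw [key]
  refine ⟨by simp [htd.symm], fun j hj => ?_, by simp⟩
  rcases eq_or_ne j tmp with hjt | hjt
  · subst hjt; simp [hr]
  · simp [hjt, hj]
end

section
/- Let n ≥ 1 and let P be an n×n matrix over ℚ. Set m := 8n² + 5n + 1. Consider row vectors in dimension 2n+1 written as [x | s | t] with x, s ∈ ℚ^{1×n} and t ∈ ℚ. Then there exist scalars β₁, …, β_m ∈ ℚ and column vectors k₁, …, k_m ∈ ℚ^{2n+1} such that for all x, s ∈ ℚ^{1×n} and all t ∈ ℚ: [x | s | t] · H(β₁,k₁) · H(β₂,k₂) ⋯ H(β_m,k_m) = [xP | xP | 0]. -/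
namespace DeltaAux

set_option linter.unusedSectionVars false

variable {d : Type*} [Fintype d] [DecidableEq d]

/-- action of one step on a row vector -/
def stepv (β : ℚ) (k v : d → ℚ) : d → ℚ :=
  fun x => v x - β * (∑ y, v y * k y) * k x

lemma vecMul_Hstep (β : ℚ) (k v : d → ℚ) :
    Matrix.vecMul v (Hstep ℚ β k) = stepv β k v := by
  funext x
  simp only [Hstep, Matrix.vecMul, dotProduct, Matrix.sub_apply, Matrix.smul_apply,
    Matrix.vecMulVec_apply, Matrix.one_apply, stepv, smul_eq_mul, mul_sub,
    Finset.sum_sub_distrib, mul_ite, mul_one, mul_zero]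
  rw [Finset.sum_ite_eq' Finset.univ x v, if_pos (Finset.mem_univ x)]
  rw [show (β * ∑ y : d, v y * k y) * k x = ∑ y : d, v y * (β * (k y * k x)) by
    rw [Finset.mul_sum, Finset.sum_mul]; exact Finset.sum_congr rfl fun y _ => by ring]

/-- run a list of steps -/
def runL (l : List (ℚ × (d → ℚ))) (v : d → ℚ) : d → ℚ :=
  l.foldl (fun w p => stepv p.1 p.2 w) v

lemma runL_nil (v : d → ℚ) : runL [] v = v := rfl

lemma runL_cons (p : ℚ × (d → ℚ)) (l) (v : d → ℚ) :
    runL (p :: l) v = runL l (stepv p.1 p.2 v) := rfl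

lemma runL_append (l₁ l₂) (v : d → ℚ) :
    runL (l₁ ++ l₂) v = runL l₂ (runL l₁ v) := List.foldl_append ..

lemma vecMul_prod (l : List (ℚ × (d → ℚ))) (v : d → ℚ) :
    Matrix.vecMul v (l.map fun p => Hstep ℚ p.1 p.2).prod = runL l v := by
  induction l generalizing v with
  | nil => simp [runL]
  | cons p l ih =>
    rw [List.map_cons, List.prod_cons, ← Matrix.vecMul_vecMul, vecMul_Hstep, runL_cons, ih]

/-- basis row vector -/
def ev (i : d) : d → ℚ := fun x => if x = i then 1 else 0

/-- `e i + a e j` -/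
def ee (i j : d) (a : ℚ) : d → ℚ :=
  fun x => (if x = i then 1 else 0) + (if x = j then a else 0)

lemma dot_ev (v : d → ℚ) (i : d) : (∑ y, v y * ev i y) = v i := by
  simp [ev, mul_ite]

lemma dot_ee (v : d → ℚ) (i j : d) (a : ℚ) :
    (∑ y, v y * ee i j a y) = v i + a * v j := by
  simp only [ee, mul_add, Finset.sum_add_distrib, mul_ite, mul_one, mul_zero]
  rw [Finset.sum_ite_eq' Finset.univ i v, Finset.sum_ite_eq' Finset.univ j]
  simp [mul_comm]

lemma ee_fst {i j : d} (h : i ≠ j) (a : ℚ) : ee i j a i = 1 := by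
  simp [ee, h]

lemma ee_snd {i j : d} (h : i ≠ j) (a : ℚ) : ee i j a j = a := by
  simp [ee, h.symm]

lemma ee_other {i j x : d} (h1 : x ≠ i) (h2 : x ≠ j) (a : ℚ) : ee i j a x = 0 := by
  simp [ee, h1, h2]

lemma stepv_ev (β : ℚ) (i : d) (v : d → ℚ) :
    stepv β (ev i) v = fun x => if x = i then (1 - β) * v i else v x := by
  funext x
  simp only [stepv, dot_ev, ev]
  by_cases hx : x = i <;> simp [hx] <;> ring

lemma stepv_ee (β a : ℚ) (i j : d) (v : d → ℚ) :
    stepv β (ee i j a) v = fun x => v x - β * (v i + a * v j) * ee i j a x := by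
  funext x; simp only [stepv, dot_ee]

/-- zeroing a coordinate -/
lemma zero_effect (i : d) (v : d → ℚ) :
    stepv 1 (ev i) v = fun x => if x = i then 0 else v x := by
  rw [stepv_ev]; funext x; by_cases hx : x = i <;> simp [hx]

/-- copy-with-scale gadget: assuming `v j = 0`, sets `j := c * v i`, preserving the rest. -/
def copyG (i j : d) (c : ℚ) : List (ℚ × (d → ℚ)) :=
  [(1, ee i j 1), (1/2, ee i j 2), (1 - c, ev j)]

lemma copyG_effect (i j : d) (hij : i ≠ j) (c : ℚ) (v : d → ℚ) (hvj : v j = 0) :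
    runL (copyG i j c) v = fun x => if x = j then c * v i else v x := by
  have hji : j ≠ i := hij.symm
  rw [copyG, runL_cons, runL_cons, runL_cons, runL_nil, stepv_ee, stepv_ee, stepv_ev]
  funext x
  by_cases hx : x = j
  · simp only [hx, if_pos rfl, ee_fst hij, ee_snd hij, hvj, if_true]
    ring
  · rw [if_neg hx]
    by_cases hxi : x = i
    · simp only [hxi, if_neg (hxi ▸ hx), ee_fst hij, ee_snd hij, hvj, if_true]
      ring
    · simp only [if_neg hx, if_neg hxi, ee_other hxi hx, ee_fst hij, ee_snd hij, hvj, if_true]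
      ring

/-- flush gadget: adds `v t'` to coordinate `q` and zeroes `t'`. -/
def flushG (q t' : d) : List (ℚ × (d → ℚ)) :=
  [(1, ee q t' 1), (2, ee q t' (1/2)), (1, ev t')]

lemma flushG_effect (q t' : d) (h : q ≠ t') (v : d → ℚ) :
    runL (flushG q t') v
      = fun x => if x = t' then 0 else if x = q then v q + v t' else v x := by
  have h' : t' ≠ q := h.symm
  rw [flushG, runL_cons, runL_cons, runL_cons, runL_nil, stepv_ee, stepv_ee, stepv_ev]
  funext x
  by_cases hx : x = t'
  · simp only [hx, if_pos rfl, ee_fst h, ee_snd h, if_true]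
    ring
  · rw [if_neg hx]
    by_cases hxq : x = q
    · simp only [hxq, if_pos rfl, ee_fst h, ee_snd h, if_neg (hxq ▸ hx), if_true]
      ring
    · simp only [if_neg hx, if_neg hxq, ee_other hxq hx, ee_fst h, ee_snd h, if_true]
      ring

/-- transvection gadget: assuming `v t' = 0`, adds `c * v p` to `v q`. -/
def transG (p q t' : d) (c : ℚ) : List (ℚ × (d → ℚ)) :=
  copyG p t' c ++ flushG q t'

lemma transG_effect (p q t' : d) (hpq : p ≠ q) (hpt : p ≠ t') (hqt : q ≠ t')
    (c : ℚ) (v : d → ℚ) (hvt : v t' = 0) :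
    runL (transG p q t' c) v = fun x => if x = q then v q + c * v p else v x := by
  rw [transG, runL_append, copyG_effect p t' hpt c v hvt,
    flushG_effect q t' hqt]
  funext x
  by_cases hx : x = t'
  · simp only [hx, if_pos rfl, if_neg hqt.symm, hvt, if_true]
  · rw [if_neg hx]
    by_cases hxq : x = q
    · simp only [hxq, if_pos rfl, if_neg hqt, if_neg (hpq.symm : q ≠ p), if_neg hpt.symm, if_true]
    · simp only [if_neg hxq, if_neg hx]

end DeltaAux

namespace Prog

open DeltaAux

variable {n : ℕ}

/-- coordinate names -/
abbrev D (n : ℕ) := (Fin n ⊕ Fin n) ⊕ Unit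
def mi (i : Fin n) : D n := Sum.inl (Sum.inl i)
def si (j : Fin n) : D n := Sum.inl (Sum.inr j)
def ti : D n := Sum.inr ()

def V (x s : Fin n → ℚ) (t : ℚ) : D n → ℚ := Sum.elim (Sum.elim x s) fun _ => t

@[simp] lemma V_mi (x s : Fin n → ℚ) (t : ℚ) (i : Fin n) : V x s t (mi i) = x i := rfl
@[simp] lemma V_si (x s : Fin n → ℚ) (t : ℚ) (j : Fin n) : V x s t (si j) = s j := rfl
@[simp] lemma V_ti (x s : Fin n → ℚ) (t : ℚ) : V x s t (ti) = t := rfl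

@[simp] lemma mi_ne_si (i j : Fin n) : mi i ≠ si j := by simp [mi, si]
@[simp] lemma si_ne_mi (i j : Fin n) : si i ≠ mi j := by simp [mi, si]
@[simp] lemma mi_ne_ti (i : Fin n) : mi i ≠ ti := by simp [mi, ti]
@[simp] lemma si_ne_ti (i : Fin n) : si i ≠ ti := by simp [si, ti]
@[simp] lemma mi_inj (i j : Fin n) : mi i = mi j ↔ i = j := by simp [mi]
@[simp] lemma si_inj (i j : Fin n) : si i = si j ↔ i = j := by simp [si]

/-- Phase 1a : zero the scratch coordinates listed in `L`. -/
lemma zeroScratch_effect (L : List (Fin n)) (x s : Fin n → ℚ) (t : ℚ) :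
    runL (L.map fun j => ((1 : ℚ), ev (si j))) (V x s t)
      = V x (fun j => if j ∈ L then 0 else s j) t := by
  induction L generalizing s with
  | nil => simp only [List.map_nil, runL_nil, List.not_mem_nil, if_false]
  | cons j L ih =>
    rw [List.map_cons, runL_cons]
    have h1 : stepv 1 (ev (si j)) (V x s t) = V x (fun j' => if j' = j then 0 else s j') t := by
      rw [zero_effect]
      funext z
      rcases z with (i' | j') | u
      · simp [V, mi, si, ti]
      · simp only [V, Sum.elim_inl, Sum.elim_inr]
        by_cases h : j' = j <;> simp [si, h]
      · simp [V, si, ti]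
    rw [show ((1:ℚ), ev (si j)).1 = (1:ℚ) from rfl, show ((1:ℚ), ev (si j)).2 = ev (si j) from rfl,
      h1, ih]
    have hs : (fun j1 => if j1 ∈ L then (0:ℚ) else if j1 = j then 0 else s j1)
        = fun j1 => if j1 = j ∨ j1 ∈ L then 0 else s j1 := by
      funext j1
      by_cases h : j1 = j <;> by_cases h2 : j1 ∈ L <;> simp [h, h2]
    rw [hs]
    simp only [List.mem_cons]

/-- Phase 1b : zero the temp coordinate. -/
lemma zeroTemp_effect (x s : Fin n → ℚ) (t : ℚ) :
    stepv 1 (ev (ti : D n)) (V x s t) = V x s 0 := by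
  rw [zero_effect]
  funext z
  rcases z with (i' | j') | u <;> simp [V, mi, si, ti]

/-- Phase 1c : zero the main coordinates. -/
lemma zeroMain_effect (L : List (Fin n)) (x s : Fin n → ℚ) (t : ℚ) :
    runL (L.map fun i => ((1 : ℚ), ev (mi i))) (V x s t)
      = V (fun i => if i ∈ L then 0 else x i) s t := by
  induction L generalizing x with
  | nil => simp only [List.map_nil, runL_nil, List.not_mem_nil, if_false]
  | cons i L ih =>
    rw [List.map_cons, runL_cons]
    have h1 : stepv 1 (ev (mi i)) (V x s t) = V (fun i' => if i' = i then 0 else x i') s t := by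
      rw [zero_effect]
      funext z
      rcases z with (i' | j') | u
      · simp only [V, Sum.elim_inl, Sum.elim_inr]
        by_cases h : i' = i <;> simp [mi, h]
      · simp [V, mi, si]
      · simp [V, mi, ti]
    rw [show ((1:ℚ), ev (mi i)).1 = (1:ℚ) from rfl, show ((1:ℚ), ev (mi i)).2 = ev (mi i) from rfl,
      h1, ih]
    have hs : (fun i1 => if i1 ∈ L then (0:ℚ) else if i1 = i then 0 else x i1)
        = fun i1 => if i1 = i ∨ i1 ∈ L then 0 else x i1 := by
      funext i1
      by_cases h : i1 = i <;> by_cases h2 : i1 ∈ L <;> simp [h, h2]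
    rw [hs]
    simp only [List.mem_cons]

end Prog

namespace Prog2
open DeltaAux Prog

variable {n : ℕ} (P : Matrix (Fin n) (Fin n) ℚ)

lemma updV_si (x s : Fin n → ℚ) (t : ℚ) (j : Fin n) (c : ℚ) :
    (fun z => if z = si j then c else V x s t z)
      = V x (fun j' => if j' = j then c else s j') t := by
  funext z
  rcases z with (i' | j') | u
  · simp [V, mi, si]
  · simp only [V, Sum.elim_inl, Sum.elim_inr, si, Sum.inl.injEq, Sum.inr.injEq]
  · simp [V, si, ti]

lemma updV_mi (x s : Fin n → ℚ) (t : ℚ) (i : Fin n) (c : ℚ) :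
    (fun z => if z = mi i then c else V x s t z)
      = V (fun i' => if i' = i then c else x i') s t := by
  funext z
  rcases z with (i' | j') | u
  · simp only [V, Sum.elim_inl, Sum.elim_inr, mi, Sum.inl.injEq]
  · simp [V, mi, si]
  · simp [V, mi, ti]

/-- inner loop: accumulate a column of `P` into scratch slot `j` -/
lemma col_effect (j : Fin n) (L : List (Fin n)) (x s : Fin n → ℚ) :
    runL (L.flatMap fun i => transG (mi i) (si j) ti (P i j)) (V x s 0)
      = V x (fun j' => if j' = j then s j + (L.map fun i => P i j * x i).sum else s j') 0 := by
  induction L generalizing s with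
  | nil =>
    simp only [List.flatMap_nil, runL_nil, List.map_nil, List.sum_nil, add_zero]
    have hs : (fun j' => if j' = j then s j else s j') = s := by
      funext j1
      by_cases h : j1 = j <;> simp [h]
    rw [hs]
  | cons i L ih =>
    rw [List.flatMap_cons, runL_append,
      transG_effect (mi i) (si j) ti (mi_ne_si i j) (mi_ne_ti i) (si_ne_ti j) (P i j)
        (V x s 0) (V_ti x s 0)]
    simp only [V_si, V_mi]
    rw [updV_si, ih]
    have hs : (fun j' => if j' = j
          then (if j = j then s j + P i j * x i else s j) + (List.map (fun i => P i j * x i) L).sum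
          else if j' = j then s j + P i j * x i else s j')
        = fun j' => if j' = j then s j + (List.map (fun i => P i j * x i) (i :: L)).sum
          else s j' := by
      funext j1
      by_cases h : j1 = j <;> simp [h, List.map_cons, List.sum_cons, add_assoc]
    rw [hs]

/-- outer loop over columns -/
lemma phase2_effect (L : List (Fin n)) (hL : L.Nodup) (x s : Fin n → ℚ) :
    runL (L.flatMap fun j =>
        (List.finRange n).flatMap fun i => transG (mi i) (si j) ti (P i j)) (V x s 0)
      = V x (fun j => if j ∈ L
          then s j + ((List.finRange n).map fun i => P i j * x i).sum else s j) 0 := by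
  induction L generalizing s with
  | nil =>
    simp only [List.flatMap_nil, runL_nil, List.not_mem_nil, if_false]
  | cons j L ih =>
    rw [List.flatMap_cons, runL_append, col_effect, ih hL.of_cons]
    have hj : j ∉ L := (List.nodup_cons.mp hL).1
    have hs : (fun j' => if j' ∈ L
          then (if j' = j then s j + ((List.finRange n).map fun i => P i j * x i).sum else s j')
            + ((List.finRange n).map fun i => P i j' * x i).sum
          else if j' = j then s j + ((List.finRange n).map fun i => P i j * x i).sum else s j')
        = fun j' => if j' ∈ j :: L
          then s j' + ((List.finRange n).map fun i => P i j' * x i).sum else s j' := by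
      funext j1
      by_cases h : j1 = j
      · subst h
        simp [hj]
      · by_cases h2 : j1 ∈ L <;> simp [h, h2]
    rw [hs]

/-- final copies from scratch to (zeroed) main -/
lemma copies_effect (L : List (Fin n)) (hL : L.Nodup) (x s : Fin n → ℚ) (t : ℚ)
    (hx : ∀ i ∈ L, x i = 0) :
    runL (L.flatMap fun i => copyG (si i) (mi i) 1) (V x s t)
      = V (fun i => if i ∈ L then s i else x i) s t := by
  induction L generalizing x with
  | nil =>
    simp only [List.flatMap_nil, runL_nil, List.not_mem_nil, if_false]
  | cons i L ih =>
    rw [List.flatMap_cons, runL_append,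
      copyG_effect (si i) (mi i) (si_ne_mi i i) 1 (V x s t)
        (by simpa using hx i (List.mem_cons_self))]
    simp only [V_si, one_mul]
    rw [updV_mi, ih (List.nodup_cons.mp hL).2]
    · have hi : i ∉ L := (List.nodup_cons.mp hL).1
      have hs : (fun i' => if i' ∈ L then s i' else if i' = i then s i else x i')
          = fun i' => if i' ∈ i :: L then s i' else x i' := by
        funext i1
        by_cases h : i1 = i
        · subst h
          simp [hi]
        · by_cases h2 : i1 ∈ L <;> simp [h, h2]
      rw [hs]
    · intro i' hi'
      have : i' ≠ i := fun he => (List.nodup_cons.mp hL).1 (he ▸ hi')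
      simp [this]
      exact hx i' (List.mem_cons_of_mem i hi')

end Prog2

namespace Final
open DeltaAux Prog Prog2

variable {n : ℕ}

lemma stepv_zero {d : Type*} [Fintype d] [DecidableEq d] (k v : d → ℚ) :
    stepv 0 k v = v := by
  funext x; simp [stepv]

lemma runL_replicate_zero {d : Type*} [Fintype d] [DecidableEq d]
    (m : ℕ) (k : d → ℚ) (v : d → ℚ) :
    runL (List.replicate m ((0:ℚ), k)) v = v := by
  induction m generalizing v with
  | zero => rfl
  | succ m ih => rw [List.replicate_succ, runL_cons, stepv_zero, ih]

/-- the full program -/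
def prog (P : Matrix (Fin n) (Fin n) ℚ) : List (ℚ × (D n → ℚ)) :=
  ((List.finRange n).map fun j => ((1:ℚ), ev (si j)))
  ++ [((1:ℚ), ev (ti : D n))]
  ++ ((List.finRange n).flatMap fun j =>
        (List.finRange n).flatMap fun i => transG (mi i) (si j) ti (P i j))
  ++ ((List.finRange n).map fun i => ((1:ℚ), ev (mi i)))
  ++ ((List.finRange n).flatMap fun i => copyG (si i) (mi i) 1)

lemma prog_length (P : Matrix (Fin n) (Fin n) ℚ) :
    (prog P).length = 6 * n ^ 2 + 5 * n + 1 := by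
  simp only [prog, List.length_append, List.length_map, List.length_cons, List.length_nil,
    List.length_flatMap, Function.comp_def, transG, copyG, flushG, List.length_finRange]
  simp only [List.length_append, List.length_cons, List.length_nil, List.map_const',
    List.sum_replicate, smul_eq_mul, List.length_finRange]
  ring

lemma prog_effect (P : Matrix (Fin n) (Fin n) ℚ) (x s : Fin n → ℚ) (t : ℚ) :
    runL (prog P) (V x s t) = V (Matrix.vecMul x P) (Matrix.vecMul x P) 0 := by
  have hC : ∀ j, ((List.finRange n).map fun i => P i j * x i).sum = Matrix.vecMul x P j := by
    intro j
    rw [← List.ofFn_eq_map, List.sum_ofFn]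
    simp only [Matrix.vecMul, dotProduct]
    exact Finset.sum_congr rfl fun i _ => mul_comm _ _
  rw [prog, runL_append, runL_append, runL_append, runL_append]
  rw [zeroScratch_effect]
  have h0 : (fun j => if j ∈ List.finRange n then (0:ℚ) else s j) = fun _ => 0 := by
    funext j; simp [List.mem_finRange]
  rw [h0]
  rw [show runL [((1:ℚ), ev (ti : D n))] (V x (fun _ => 0) t)
      = stepv 1 (ev (ti : D n)) (V x (fun _ => 0) t) from rfl, zeroTemp_effect]
  rw [phase2_effect P (List.finRange n) (List.nodup_finRange n)]
  have h1 : (fun j => if j ∈ List.finRange n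
        then (0:ℚ) + ((List.finRange n).map fun i => P i j * x i).sum else 0)
      = Matrix.vecMul x P := by
    funext j; simp [List.mem_finRange, hC j]
  rw [h1]
  rw [zeroMain_effect]
  have h2 : (fun i => if i ∈ List.finRange n then (0:ℚ) else x i) = fun _ => 0 := by
    funext i; simp [List.mem_finRange]
  rw [h2]
  rw [copies_effect (List.finRange n) (List.nodup_finRange n) _ _ _ (fun i _ => rfl)]
  funext z
  rcases z with (i | j) | u <;> simp [V, List.mem_finRange]

end Final


/-- any `n×n` matrix `P` over `ℚ` can be applied to a row vector
`[x | s | t]` in dimension `2n+1` (main `x`, scratch `s`, temp `t`) using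
`m = 8n² + 5n + 1` multiplicative DeltaNet steps, producing `[xP | xP | 0]`. -/
theorem apply_matrix_with_Hsteps {n : ℕ} (hn : 1 ≤ n)
    (P : Matrix (Fin n) (Fin n) ℚ) :
    ∃ (β : Fin (8 * n ^ 2 + 5 * n + 1) → ℚ)
      (k : Fin (8 * n ^ 2 + 5 * n + 1) → ((Fin n ⊕ Fin n) ⊕ Unit) → ℚ),
      ∀ (x s : Fin n → ℚ) (t : ℚ),
        Matrix.vecMul (Sum.elim (Sum.elim x s) fun _ => t)
            (List.ofFn fun i => Hstep ℚ (β i) (k i)).prod =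
          Sum.elim (Sum.elim (Matrix.vecMul x P) (Matrix.vecMul x P)) fun _ => 0 := by
  classical
  open DeltaAux Prog Prog2 Final in
  set M := 8 * n ^ 2 + 5 * n + 1 with hM
  set l : List (ℚ × (D n → ℚ)) :=
    prog P ++ List.replicate (M - (prog P).length) ((0:ℚ), ev (ti : D n)) with hl
  have hle : (prog P).length ≤ M := by
    rw [Final.prog_length, hM]
    have : 6 * n ^ 2 ≤ 8 * n ^ 2 := Nat.mul_le_mul_right _ (by norm_num)
    omega
  have hlen : l.length = M := by
    rw [hl, List.length_append, List.length_replicate]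
    omega
  refine ⟨fun i => (l.get (Fin.cast hlen.symm i)).1,
    fun i => (l.get (Fin.cast hlen.symm i)).2, ?_⟩
  intro x s t
  have hofn : (List.ofFn fun i =>
        Hstep ℚ (l.get (Fin.cast hlen.symm i)).1 (l.get (Fin.cast hlen.symm i)).2)
      = l.map fun p => Hstep ℚ p.1 p.2 := by
    apply List.ext_getElem
    · simp [hlen]; exact hM.symm
    · intro i h1 h2
      simp only [List.getElem_ofFn, List.getElem_map, Fin.cast_mk, List.get_eq_getElem]
  rw [hofn, vecMul_prod]
  rw [show (Sum.elim (Sum.elim x s) fun _ => t) = V x s t from rfl]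
  rw [hl, runL_append, prog_effect, runL_replicate_zero]
  rfl
end

section
/- Let n ≥ 1, m ≥ 1. Let E be an edge relation on vertices V = {1,…,n} that is deterministic (for every i there is at most one j with E i j), such that the set of edges {(i,j) : E i j} is finite with cardinality m, and such that the vertex n has no outgoing edge. Define a directed graph G′ on the vertex set ({0,…,m} × V) ∪ {v_F} (where v_F is a fresh vertex) with edge relation E′ given by: E′ ((h,i), (h+1,j)) for every edge E i j and every h ∈ {0,…,m−1}, and E′ ((h,n), v_F) for every h ∈ {0,…,m}. Then for every s ∈ V: the vertex n is reachable from s via the reflexive-transitive closure of E if and only if v_F is reachable from (0,s) via the reflexive-transitive closure of E′. -/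
/-- correctness of the layered-graph reduction.  Let `E` be a
deterministic edge relation on vertices `Fin n` (vertex `n` of the paper being
the last element `vlast`), with exactly `m` edges and no outgoing edge at
`vlast`.  The layered graph `G′` has vertices `(Fin (m+1) × Fin n) ⊕ Unit`
(the extra `Unit` vertex is `v_F`), an edge from `(h, i)` to `(h+1, j)` for each
edge `E i j` and each `h ∈ {0,…,m−1}`, and an edge from `(h, vlast)` to `v_F`
for each `h ∈ {0,…,m}`.  Then `vlast` is reachable from `s` in `E` iff `v_F`
is reachable from `(0, s)` in `E′`. -/
theorem layered_reduction_correct (n m : ℕ) (hn : 1 ≤ n) (hm : 1 ≤ m)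
    (E : Fin n → Fin n → Prop)
    (hdet : ∀ i j j', E i j → E i j' → j = j')
    (hcard : {p : Fin n × Fin n | E p.1 p.2}.ncard = m)
    (vlast : Fin n) (hvlast : (vlast : ℕ) = n - 1)
    (hnoout : ∀ j, ¬ E vlast j)
    (E' : ((Fin (m + 1) × Fin n) ⊕ Unit) → ((Fin (m + 1) × Fin n) ⊕ Unit) → Prop)
    (hE' : ∀ a b, E' a b ↔
      ((∃ (h : Fin m) (i j : Fin n), E i j ∧
          a = Sum.inl (h.castSucc, i) ∧ b = Sum.inl (h.succ, j)) ∨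
        (∃ h : Fin (m + 1), a = Sum.inl (h, vlast) ∧ b = Sum.inr ())))
    (s : Fin n) :
    Relation.ReflTransGen E s vlast ↔
      Relation.ReflTransGen E' (Sum.inl ((0 : Fin (m + 1)), s)) (Sum.inr ()) := by
  classical
  obtain ⟨g, hgE, hgfix⟩ : ∃ g : Fin n → Fin n,
      (∀ i, (∃ j, E i j) → E i (g i)) ∧ (∀ i, ¬(∃ j, E i j) → g i = i) := by
    refine ⟨fun i => if h : ∃ j, E i j then h.choose else i, ?_, ?_⟩
    · intro i h; simp only [dif_pos h]; exact h.choose_spec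
    · intro i h; simp only [dif_neg h]
  have hgstep : ∀ i j, E i j → g i = j := fun i j hij => hdet i (g i) j (hgE i ⟨j, hij⟩) hij
  constructor
  · intro hreach
    have hex : ∃ k, g^[k] s = vlast := by
      induction hreach using Relation.ReflTransGen.head_induction_on with
      | refl => exact ⟨0, rfl⟩
      | head hab _ ih =>
        obtain ⟨k, hk⟩ := ih
        exact ⟨k + 1, by rw [Function.iterate_succ_apply, hgstep _ _ hab]; exact hk⟩
    obtain ⟨k, hk, hmin⟩ : ∃ k, g^[k] s = vlast ∧ ∀ t, t < k → g^[t] s ≠ vlast :=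
      ⟨Nat.find hex, Nat.find_spec hex, fun t ht => Nat.find_min hex ht⟩
    have hinj : ∀ a b, a ≤ k → b ≤ k → g^[a] s = g^[b] s → a = b := by
      have key : ∀ a b, a < b → b ≤ k → g^[a] s = g^[b] s → False := by
        intro a b hab hbk heq
        apply hmin (k - b + a) (by omega)
        calc g^[k - b + a] s = g^[k - b] (g^[a] s) := Function.iterate_add_apply g (k - b) a s
          _ = g^[k - b] (g^[b] s) := by rw [heq]
          _ = g^[k - b + b] s := (Function.iterate_add_apply g (k - b) b s).symm
          _ = vlast := by rw [Nat.sub_add_cancel hbk]; exact hk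
      intro a b ha hb heq
      rcases lt_trichotomy a b with h | h | h
      · exact absurd heq fun e => key a b h hb e
      · exact h
      · exact absurd heq.symm fun e => key b a h ha e
    have hout : ∀ t, t < k → E (g^[t] s) (g^[t + 1] s) := by
      intro t ht
      by_cases hx : ∃ j, E (g^[t] s) j
      · rw [Function.iterate_succ_apply']; exact hgE _ hx
      · exfalso
        have he : g^[t + 1] s = g^[t] s := by
          rw [Function.iterate_succ_apply', hgfix _ hx]
        have := hinj (t + 1) t (by omega) (by omega) he
        omega
    have hkm : k ≤ m := by
      have hS : Nat.card {p : Fin n × Fin n // E p.1 p.2} = m := by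
        rw [← hcard]; exact Nat.card_coe_set_eq _
      have hinjF : Function.Injective
          (fun t : Fin k => (⟨(g^[(t : ℕ)] s, g^[(t : ℕ) + 1] s), hout t t.isLt⟩ :
            {p : Fin n × Fin n // E p.1 p.2})) := by
        intro a b hab
        have h1 : g^[(a : ℕ)] s = g^[(b : ℕ)] s :=
          congrArg (fun x => x.1.1) hab
        exact Fin.ext (hinj a b a.isLt.le b.isLt.le h1)
      have := Nat.card_le_card_of_injective _ hinjF
      rw [hS] at this
      simpa using this
    have claim : ∀ d t (ht : t + d = k),
        Relation.ReflTransGen E' (Sum.inl ((⟨t, by omega⟩ : Fin (m + 1)), g^[t] s))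
          (Sum.inr ()) := by
      intro d
      induction d with
      | zero =>
        intro t ht
        apply Relation.ReflTransGen.single
        rw [hE']
        right
        refine ⟨⟨t, by omega⟩, ?_, rfl⟩
        have htk : t = k := by omega
        subst htk
        rw [hk]
      | succ d ih =>
        intro t ht
        refine Relation.ReflTransGen.head ?_ (ih (t + 1) (by omega))
        rw [hE']
        left
        exact ⟨⟨t, by omega⟩, g^[t] s, g^[t + 1] s, hout t (by omega), rfl, rfl⟩
    have h0 := claim k 0 (by omega)
    convert h0 using 3 <;> rfl
  · intro hreach
    have key : ∀ a, Relation.ReflTransGen E' a (Sum.inr ()) →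
        ∀ (h : Fin (m + 1)) (i : Fin n), a = Sum.inl (h, i) →
          Relation.ReflTransGen E i vlast := by
      intro a ha
      induction ha using Relation.ReflTransGen.head_induction_on with
      | refl => intro h i hi; simp at hi
      | head hab hrest ih =>
        intro h i hi
        rw [hE'] at hab
        rcases hab with ⟨h0, i0, j0, hij, ha0, hb0⟩ | ⟨h0, ha0, hb0⟩
        · rw [hi] at ha0
          simp only [Sum.inl.injEq, Prod.mk.injEq] at ha0
          obtain ⟨hh, hii⟩ := ha0
          subst hii
          exact Relation.ReflTransGen.head hij (ih h0.succ j0 hb0)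
        · rw [hi] at ha0
          simp only [Sum.inl.injEq, Prod.mk.injEq] at ha0
          obtain ⟨hh, hii⟩ := ha0
          subst hii
          exact Relation.ReflTransGen.refl
    exact key _ hreach 0 s rfl
end
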